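/- Let d ≥ 1, λ ≥ 0, K ≥ 0, and let φ : ℝ^d → ℝ be K-Lipschitz and λ-concave. For t > 0 let u_t be the Hopf–Lax function and set λ_t = λ/(1+λt), and define D u_t(x) = {q ∈ ℝ^d : u_t(z) ≤ u_t(x) + ⟨q, z − x⟩ + (λ_t/2)‖z − x‖² for all z}. Suppose x, x̂ : [0,∞) → ℝ^d are locally Lipschitz curves with x(0) = x̂(0), such that for almost every t > 0 both derivatives exist and satisfy x'(t) ∈ D u_t(x(t)) and x̂'(t) ∈ D u_t(x̂(t)). Then x(t) = x̂(t) for all t ≥ 0. -/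

import Mathlib

open scoped RealInnerProductSpace
open MeasureTheory
noncomputable section

/-- The Hopf–Lax function. -/
def hopfLax {d : ℕ} (φ : EuclideanSpace ℝ (Fin d) → ℝ) (t : ℝ)
    (x : EuclideanSpace ℝ (Fin d)) : ℝ :=
  ⨅ y : EuclideanSpace ℝ (Fin d), (‖x - y‖ ^ 2 / (2 * t) + φ y)

/-- The differential `D u_t(x)` of the Hopf–Lax function, with `λ_t = λ/(1+λt)`. -/
def DHopfLax {d : ℕ} (φ : EuclideanSpace ℝ (Fin d) → ℝ) (lam t : ℝ)
    (x : EuclideanSpace ℝ (Fin d)) : Set (EuclideanSpace ℝ (Fin d)) :=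
  {q | ∀ z, hopfLax φ t z ≤ hopfLax φ t x + ⟪q, z - x⟫ +
      (lam / (1 + lam * t)) / 2 * ‖z - x‖ ^ 2}



open MeasureTheory Set Filter intervalIntegral

lemma ae_key {g : ℝ → ℝ} {T : ℝ} (hT : 0 < T) {C : NNReal}
    (hg : LipschitzOnWith C g (Set.Icc 0 (T+1)))
    (hae : ∀ᵐ u ∂(volume : Measure ℝ), u ∈ Set.Ioo 0 T →
      ∃ g', HasDerivAt g g' u ∧ g' ≤ 0) :
    g T ≤ g 0 := by
  set h : ℕ → ℝ := fun n => 1 / (n + 1) with hh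
  have hpos : ∀ n, 0 < h n := fun n => by positivity
  have hle1 : ∀ n, h n ≤ 1 := fun n => by
    rw [hh]; rw [div_le_one (by positivity)]; exact le_add_of_nonneg_left (Nat.cast_nonneg n)
  have hh0 : Tendsto h atTop (nhds 0) := tendsto_one_div_add_atTop_nhds_zero_nat
  have gcont : ContinuousOn g (Icc 0 (T+1)) := hg.continuousOn
  have gint : ∀ a b, a ∈ Icc 0 (T+1) → b ∈ Icc 0 (T+1) →
      IntervalIntegrable g volume a b := by
    intro a b ha hb
    apply ContinuousOn.intervalIntegrable
    apply gcont.mono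
    exact uIcc_subset_Icc ha hb
  set G : ℝ → ℝ := fun s => ∫ y in (0:ℝ)..s, g y with hG
  -- boundary slopes
  have mem0 : (0:ℝ) ∈ Icc (0:ℝ) (T+1) := by constructor <;> nlinarith
  have memT : T ∈ Icc (0:ℝ) (T+1) := by constructor <;> nlinarith
  have slope_bound : ∀ (a : ℝ) (n : ℕ), a ∈ Icc 0 T →
      |(h n)⁻¹ * (G (a + h n) - G a) - g a| ≤ C * h n := by
    intro a n ha
    have hmema : a ∈ Icc (0:ℝ) (T+1) := ⟨ha.1, by nlinarith [ha.2]⟩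
    have hmemah : a + h n ∈ Icc (0:ℝ) (T+1) :=
      ⟨by nlinarith [ha.1, (hpos n).le], by nlinarith [ha.2, hle1 n]⟩
    have h1 : G (a + h n) - G a = ∫ y in a..(a + h n), g y := by
      rw [hG]
      exact integral_interval_sub_left (gint 0 _ mem0 hmemah) (gint 0 _ mem0 hmema)
    have h2 : (∫ y in a..(a + h n), g y) - (h n) * g a
        = ∫ y in a..(a + h n), (g y - g a) := by
      rw [intervalIntegral.integral_sub (gint a _ hmema hmemah)
        intervalIntegrable_const, intervalIntegral.integral_const]
      simp [smul_eq_mul, add_sub_cancel_left]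
    have h3 : |∫ y in a..(a + h n), (g y - g a)| ≤ (C * h n) * |a + h n - a| := by
      rw [← Real.norm_eq_abs]
      apply intervalIntegral.norm_integral_le_of_norm_le_const
      intro y hy
      rw [uIoc_of_le (by nlinarith [hpos n])] at hy
      have hymem : y ∈ Icc (0:ℝ) (T+1) := ⟨by nlinarith [hy.1.le, ha.1], by
        nlinarith [hy.2, hmemah.2]⟩
      have := hg.dist_le_mul y hymem a hmema
      rw [Real.dist_eq, Real.dist_eq] at this
      calc ‖g y - g a‖ ≤ C * |y - a| := this
        _ ≤ C * h n := by
            apply mul_le_mul_of_nonneg_left _ C.coe_nonneg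
            rw [abs_of_nonneg (by nlinarith [hy.1.le])]
            nlinarith [hy.2]
    have h4 : |a + h n - a| = h n := by rw [add_sub_cancel_left]; exact abs_of_pos (hpos n)
    rw [h4] at h3
    have h5 : (h n)⁻¹ * (G (a + h n) - G a) - g a
        = (h n)⁻¹ * ((∫ y in a..(a + h n), g y) - (h n) * g a) := by
      rw [h1, mul_sub, ← mul_assoc, inv_mul_cancel₀ (hpos n).ne', one_mul]
    rw [h5, h2, abs_mul, abs_inv, abs_of_pos (hpos n)]
    rw [inv_mul_le_iff₀ (hpos n)]
    calc |∫ y in a..(a+h n), (g y - g a)| ≤ C * h n * h n := h3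
      _ = h n * (C * h n) := by ring
  have tendA : ∀ (a : ℝ), a ∈ Icc 0 T →
      Tendsto (fun n => (h n)⁻¹ * (G (a + h n) - G a)) atTop (nhds (g a)) := by
    intro a ha
    have : Tendsto (fun n => (h n)⁻¹ * (G (a + h n) - G a) - g a) atTop (nhds 0) := by
      apply squeeze_zero_norm (fun n => slope_bound a n ha)
      have := hh0.const_mul (C : ℝ)
      rw [mul_zero] at this
      exact this
    simpa using this.add_const (g a)
  -- the quotients
  set q : ℕ → ℝ → ℝ := fun n u => (g (u + h n) - g u) / h n with hq
  have Feq : ∀ n, (∫ u in (0:ℝ)..T, q n u)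
      = (h n)⁻¹ * (G (T + h n) - G T) - (h n)⁻¹ * (G (h n) - G 0) := by
    intro n
    have memh : h n ∈ Icc (0:ℝ) (T+1) := ⟨(hpos n).le, by nlinarith [hle1 n]⟩
    have memTh : T + h n ∈ Icc (0:ℝ) (T+1) := ⟨by nlinarith [(hpos n).le], by
      nlinarith [hle1 n]⟩
    have hint2 : IntervalIntegrable (fun u => g (u + h n)) volume 0 T := by
      apply ContinuousOn.intervalIntegrable
      apply (gcont.comp (Continuous.continuousOn (by continuity)))
      intro u hu
      rw [uIcc_of_le hT.le] at hu
      show u + h n ∈ Icc (0:ℝ) (T+1)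
      rw [Set.mem_Icc]
      exact ⟨by nlinarith [hu.1, (hpos n).le], by nlinarith [hu.2, hle1 n]⟩
    have e1 : (∫ u in (0:ℝ)..T, q n u)
        = (h n)⁻¹ * ((∫ u in (0:ℝ)..T, g (u + h n)) - ∫ u in (0:ℝ)..T, g u) := by
      rw [hq]
      simp only [div_eq_inv_mul]
      rw [intervalIntegral.integral_const_mul, intervalIntegral.integral_sub hint2
        (gint 0 T mem0 memT)]
    have e2 : (∫ u in (0:ℝ)..T, g (u + h n)) = ∫ u in (h n)..(T + h n), g u := by
      simpa using intervalIntegral.integral_comp_add_right g (h n)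
    have e3 : (∫ u in (h n)..(T + h n), g u) = G (T + h n) - G (h n) :=
      (integral_interval_sub_left (gint 0 _ mem0 memTh) (gint 0 _ mem0 memh)).symm
    have e4 : G 0 = 0 := intervalIntegral.integral_same
    have e5 : G T = ∫ u in (0:ℝ)..T, g u := rfl
    rw [e1, e2, e3, ← e5, e4]
    ring
  have tendF1 : Tendsto (fun n => ∫ u in (0:ℝ)..T, q n u) atTop (nhds (g T - g 0)) := by
    have hA := tendA T ⟨hT.le, le_rfl⟩
    have hB := tendA 0 ⟨le_rfl, hT.le⟩
    simp only [Feq]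
    simpa using hA.sub (by simpa using hB)
  -- DCT
  have hne : ∀ᵐ (u : ℝ) ∂(volume : Measure ℝ), u ≠ T := by
    have : (volume : Measure ℝ) {T} = 0 := measure_singleton T
    rw [ae_iff]
    convert this using 2
    ext u; simp
  have tendF2 : Tendsto (fun n => ∫ u in (0:ℝ)..T, q n u) atTop
      (nhds (∫ u in (0:ℝ)..T, deriv g u)) := by
    apply intervalIntegral.tendsto_integral_filter_of_dominated_convergence
      (bound := fun _ => (C : ℝ))
    · filter_upwards with n
      have : ContinuousOn (q n) (Icc 0 T) := by
        apply ContinuousOn.div_const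
        apply ContinuousOn.sub
        · apply (gcont.comp (Continuous.continuousOn (by continuity)))
          intro u hu
          show u + h n ∈ Icc (0:ℝ) (T+1)
          rw [Set.mem_Icc]
          exact ⟨by nlinarith [hu.1, (hpos n).le], by nlinarith [hu.2, hle1 n]⟩
        · exact gcont.mono (Icc_subset_Icc le_rfl (by nlinarith))
      exact (this.aestronglyMeasurable measurableSet_Icc).mono_measure
        (Measure.restrict_mono (by rw [uIoc_of_le hT.le]; exact Ioc_subset_Icc_self) le_rfl)
    · filter_upwards with n
      filter_upwards with u hu
      rw [uIoc_of_le hT.le] at hu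
      have hmemu : u ∈ Icc (0:ℝ) (T+1) := ⟨hu.1.le, by nlinarith [hu.2]⟩
      have hmemuh : u + h n ∈ Icc (0:ℝ) (T+1) :=
        ⟨by nlinarith [hu.1.le, (hpos n).le], by nlinarith [hu.2, hle1 n]⟩
      have := hg.dist_le_mul (u + h n) hmemuh u hmemu
      rw [Real.dist_eq, Real.dist_eq, add_sub_cancel_left, abs_of_pos (hpos n)] at this
      rw [hq]
      simp only [norm_div, Real.norm_eq_abs, abs_of_pos (hpos n)]
      rw [div_le_iff₀ (hpos n)]
      exact this
    · exact intervalIntegrable_const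
    · filter_upwards [hae, hne] with u hu hune hmem
      rw [uIoc_of_le hT.le] at hmem
      have : u ∈ Ioo 0 T := ⟨hmem.1, lt_of_le_of_ne hmem.2 hune⟩
      obtain ⟨g', hg', -⟩ := hu this
      rw [hg'.deriv]
      have hslope := hasDerivAt_iff_tendsto_slope.mp hg'
      have htend : Tendsto (fun n => u + h n) atTop (nhdsWithin u {u}ᶜ) := by
        apply tendsto_nhdsWithin_of_tendsto_nhds_of_eventually_within
        · simpa using (tendsto_const_nhds.add hh0)
        · filter_upwards with n
          simp only [mem_compl_iff, mem_singleton_iff]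
          nlinarith [hpos n]
      have := hslope.comp htend
      convert this using 1
      funext n
      rw [Function.comp_apply, slope_def_field, hq]
      simp [add_sub_cancel_left]
  have heq : g T - g 0 = ∫ u in (0:ℝ)..T, deriv g u := tendsto_nhds_unique tendF1 tendF2
  have hint_nonpos : (∫ u in (0:ℝ)..T, deriv g u) ≤ 0 := by
    rw [intervalIntegral.integral_of_le hT.le]
    apply integral_nonpos_of_ae
    rw [EventuallyLE, ae_restrict_iff' measurableSet_Ioc]
    filter_upwards [hae, hne] with u hu hune hmem
    have : u ∈ Ioo 0 T := ⟨hmem.1, lt_of_le_of_ne hmem.2 hune⟩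
    obtain ⟨g', hg', hle⟩ := hu this
    rw [Pi.zero_apply, hg'.deriv]
    exact hle
  linarith

open scoped RealInnerProductSpace

lemma exp_lip {a b : ℝ} (ha : a ≤ 0) (hb : b ≤ 0) :
    |Real.exp a - Real.exp b| ≤ |a - b| := by
  wlog hab : b ≤ a generalizing a b
  · rw [abs_sub_comm, abs_sub_comm a b]; exact this hb ha (le_of_not_ge hab)
  rw [abs_of_nonneg (sub_nonneg.2 (Real.exp_le_exp.2 hab)), abs_of_nonneg (sub_nonneg.2 hab)]
  have h1 := Real.add_one_le_exp (b - a)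
  have h2 : Real.exp a ≤ 1 := Real.exp_le_one_iff.2 ha
  have h3 : Real.exp b = Real.exp a * Real.exp (b - a) := by
    rw [← Real.exp_add]; ring_nf
  nlinarith [Real.exp_pos a, Real.exp_pos (b - a)]

set_option maxHeartbeats 1000000 in
theorem stmt6 (d : ℕ) (hd : 1 ≤ d) (lam K : ℝ) (hlam : 0 ≤ lam) (hK : 0 ≤ K)
    (φ : EuclideanSpace ℝ (Fin d) → ℝ)
    (hLip : ∀ y z, |φ y - φ z| ≤ K * ‖y - z‖)
    (hConc : ConcaveOn ℝ Set.univ (fun y => φ y - lam / 2 * ‖y‖ ^ 2))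
    (x xh : ℝ → EuclideanSpace ℝ (Fin d))
    (hxLip : ∀ T : ℝ, 0 < T → ∃ C : NNReal, LipschitzOnWith C x (Set.Icc 0 T))
    (hxhLip : ∀ T : ℝ, 0 < T → ∃ C : NNReal, LipschitzOnWith C xh (Set.Icc 0 T))
    (h0 : x 0 = xh 0)
    (hx : ∀ᵐ t ∂(volume : Measure ℝ), 0 < t →
      ∃ v, HasDerivAt x v t ∧ v ∈ DHopfLax φ lam t (x t))
    (hxh : ∀ᵐ t ∂(volume : Measure ℝ), 0 < t →
      ∃ v, HasDerivAt xh v t ∧ v ∈ DHopfLax φ lam t (xh t)) :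
    ∀ t : ℝ, 0 ≤ t → x t = xh t := by
  intro T hT0
  rcases hT0.eq_or_lt with h | hT
  · rw [← h]; exact h0
  set f : ℝ → EuclideanSpace ℝ (Fin d) := fun s => x s - xh s with hf
  set g : ℝ → ℝ := fun s => Real.exp (-(2 * lam * s)) * ‖f s‖ ^ 2 with hg
  -- Lipschitz data
  obtain ⟨Cx, hCx⟩ := hxLip (T + 1) (by linarith)
  obtain ⟨Ch, hCh⟩ := hxhLip (T + 1) (by linarith)
  set M : ℝ := ((Cx : ℝ) + (Ch : ℝ)) * (T + 1) with hM
  have hM0 : 0 ≤ M := by positivity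
  have hmem0 : (0 : ℝ) ∈ Set.Icc (0:ℝ) (T+1) := ⟨le_rfl, by linarith⟩
  have hfLip : ∀ s₁ ∈ Set.Icc (0:ℝ) (T+1), ∀ s₂ ∈ Set.Icc (0:ℝ) (T+1),
      ‖f s₁ - f s₂‖ ≤ ((Cx : ℝ) + (Ch : ℝ)) * |s₁ - s₂| := by
    intro s₁ h₁ s₂ h₂
    have e1 := hCx.dist_le_mul s₁ h₁ s₂ h₂
    have e2 := hCh.dist_le_mul s₁ h₁ s₂ h₂
    rw [dist_eq_norm] at e1 e2
    rw [Real.dist_eq] at e1 e2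
    have : f s₁ - f s₂ = (x s₁ - x s₂) - (xh s₁ - xh s₂) := by
      rw [hf]; exact sub_sub_sub_comm _ _ _ _
    rw [this]
    calc ‖(x s₁ - x s₂) - (xh s₁ - xh s₂)‖ ≤ ‖x s₁ - x s₂‖ + ‖xh s₁ - xh s₂‖ :=
          norm_sub_le _ _
      _ ≤ (Cx : ℝ) * |s₁ - s₂| + (Ch : ℝ) * |s₁ - s₂| := add_le_add e1 e2
      _ = ((Cx : ℝ) + (Ch : ℝ)) * |s₁ - s₂| := by ring
  have hfbd : ∀ s ∈ Set.Icc (0:ℝ) (T+1), ‖f s‖ ≤ M := by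
    intro s hs
    have h00 : f 0 = 0 := by rw [hf]; simp [h0]
    have := hfLip s hs 0 hmem0
    rw [h00, sub_zero, sub_zero, abs_of_nonneg hs.1] at this
    calc ‖f s‖ ≤ ((Cx : ℝ) + (Ch : ℝ)) * s := this
      _ ≤ M := by
          rw [hM]
          apply mul_le_mul_of_nonneg_left _ (by positivity)
          linarith [hs.2]
  -- Lipschitz of g
  set L : ℝ := 2 * M * ((Cx : ℝ) + (Ch : ℝ)) + 2 * lam * M ^ 2 with hL
  have hL0 : 0 ≤ L := by positivity
  have hgLip : LipschitzOnWith L.toNNReal g (Set.Icc 0 (T + 1)) := by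
    rw [lipschitzOnWith_iff_dist_le_mul]
    intro s₁ h₁ s₂ h₂
    rw [Real.dist_eq, Real.dist_eq, Real.coe_toNNReal _ hL0]
    have e₁ : Real.exp (-(2 * lam * s₁)) ≤ 1 := Real.exp_le_one_iff.2 (by nlinarith [h₁.1])
    have e₂ : Real.exp (-(2 * lam * s₂)) ≤ 1 := Real.exp_le_one_iff.2 (by nlinarith [h₂.1])
    have eexp : |Real.exp (-(2 * lam * s₁)) - Real.exp (-(2 * lam * s₂))|
        ≤ 2 * lam * |s₁ - s₂| := by
      have := exp_lip (a := -(2 * lam * s₁)) (b := -(2 * lam * s₂))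
        (by nlinarith [h₁.1]) (by nlinarith [h₂.1])
      calc |Real.exp (-(2 * lam * s₁)) - Real.exp (-(2 * lam * s₂))|
          ≤ |(-(2 * lam * s₁)) - (-(2 * lam * s₂))| := this
        _ = 2 * lam * |s₁ - s₂| := by
            rw [show (-(2 * lam * s₁)) - (-(2 * lam * s₂)) = -(2 * lam * (s₁ - s₂)) by ring,
              abs_neg, abs_mul, abs_of_nonneg (by positivity : (0:ℝ) ≤ 2 * lam)]
    have esq : |‖f s₁‖ ^ 2 - ‖f s₂‖ ^ 2| ≤ 2 * M * (((Cx : ℝ) + (Ch : ℝ)) * |s₁ - s₂|) := by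
      have hns : |‖f s₁‖ - ‖f s₂‖| ≤ ‖f s₁ - f s₂‖ := abs_norm_sub_norm_le _ _
      have hfs := hfLip s₁ h₁ s₂ h₂
      have b₁ := hfbd s₁ h₁
      have b₂ := hfbd s₂ h₂
      have : |‖f s₁‖ ^ 2 - ‖f s₂‖ ^ 2| = |‖f s₁‖ - ‖f s₂‖| * (‖f s₁‖ + ‖f s₂‖) := by
        rw [← abs_of_nonneg (by positivity : (0:ℝ) ≤ ‖f s₁‖ + ‖f s₂‖), ← abs_mul]
        ring_nf
      rw [this]
      have h1 : |‖f s₁‖ - ‖f s₂‖| ≤ ((Cx : ℝ) + (Ch : ℝ)) * |s₁ - s₂| := hns.trans hfs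
      nlinarith [abs_nonneg (‖f s₁‖ - ‖f s₂‖), norm_nonneg (f s₁), norm_nonneg (f s₂)]
    have decomp : g s₁ - g s₂
        = (Real.exp (-(2 * lam * s₁)) - Real.exp (-(2 * lam * s₂))) * ‖f s₁‖ ^ 2
          + Real.exp (-(2 * lam * s₂)) * (‖f s₁‖ ^ 2 - ‖f s₂‖ ^ 2) := by
      rw [hg]; ring
    rw [decomp]
    have bsq : ‖f s₁‖ ^ 2 ≤ M ^ 2 := by nlinarith [hfbd s₁ h₁, norm_nonneg (f s₁)]
    calc |(Real.exp (-(2 * lam * s₁)) - Real.exp (-(2 * lam * s₂))) * ‖f s₁‖ ^ 2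
          + Real.exp (-(2 * lam * s₂)) * (‖f s₁‖ ^ 2 - ‖f s₂‖ ^ 2)|
        ≤ |Real.exp (-(2 * lam * s₁)) - Real.exp (-(2 * lam * s₂))| * ‖f s₁‖ ^ 2
          + Real.exp (-(2 * lam * s₂)) * |‖f s₁‖ ^ 2 - ‖f s₂‖ ^ 2| := by
          calc _ ≤ |(Real.exp (-(2 * lam * s₁)) - Real.exp (-(2 * lam * s₂))) * ‖f s₁‖ ^ 2|
              + |Real.exp (-(2 * lam * s₂)) * (‖f s₁‖ ^ 2 - ‖f s₂‖ ^ 2)| := abs_add_le _ _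
            _ = _ := by
                rw [abs_mul, abs_mul, abs_of_nonneg (by positivity : (0:ℝ) ≤ ‖f s₁‖ ^ 2),
                  abs_of_nonneg (Real.exp_pos _).le]
      _ ≤ (2 * lam * |s₁ - s₂|) * M ^ 2
          + 1 * (2 * M * (((Cx : ℝ) + (Ch : ℝ)) * |s₁ - s₂|)) :=
          add_le_add
            (mul_le_mul eexp bsq (by positivity) (by positivity))
            (mul_le_mul e₂ esq (abs_nonneg _) zero_le_one)
      _ = L * |s₁ - s₂| := by rw [hL]; ring
  -- a.e. derivative of g is nonpositive
  have hae : ∀ᵐ u ∂(volume : Measure ℝ), u ∈ Set.Ioo 0 T →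
      ∃ g', HasDerivAt g g' u ∧ g' ≤ 0 := by
    filter_upwards [hx, hxh] with s hxs hxhs hmem
    obtain ⟨v, hv, hvD⟩ := hxs hmem.1
    obtain ⟨w, hw, hwD⟩ := hxhs hmem.1
    have hfd : HasDerivAt f (v - w) s := hv.sub hw
    have hrin : HasDerivAt (fun s => ⟪f s, f s⟫) (⟪f s, v - w⟫ + ⟪v - w, f s⟫) s :=
      hfd.inner ℝ hfd
    have hr : HasDerivAt (fun s => ‖f s‖ ^ 2) (2 * ⟪v - w, f s⟫) s := by
      have : (fun s => ‖f s‖ ^ 2) = fun s => ⟪f s, f s⟫ := by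
        funext u; rw [real_inner_self_eq_norm_sq]
      rw [this]
      convert hrin using 1
      rw [real_inner_comm (f s) (v - w)]; ring
    have hexp : HasDerivAt (fun s : ℝ => Real.exp (-(2 * lam * s)))
        (Real.exp (-(2 * lam * s)) * (-(2 * lam))) s := by
      have h1 : HasDerivAt (fun s : ℝ => -(2 * lam * s)) (-(2 * lam)) s := by
        have h := ((hasDerivAt_id s).const_mul (2 * lam)).neg; rw [mul_one] at h; exact h
      exact h1.exp
    have hgd : HasDerivAt g
        (Real.exp (-(2 * lam * s)) * (-(2 * lam)) * ‖f s‖ ^ 2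
          + Real.exp (-(2 * lam * s)) * (2 * ⟪v - w, f s⟫)) s := hexp.mul hr
    refine ⟨_, hgd, ?_⟩
    -- the key inequality
    have key : ⟪v - w, f s⟫ ≤ lam * ‖f s‖ ^ 2 := by
      have H1 := hvD (xh s)
      have H2 := hwD (x s)
      set c : ℝ := lam / (1 + lam * s) with hc
      have hc_le : c ≤ lam := by
        rw [hc]
        apply div_le_self hlam
        nlinarith [hmem.1, hlam]
      have hsub : xh s - x s = -(f s) := by rw [hf]; exact (neg_sub _ _).symm
      have hsub' : x s - xh s = f s := by rw [hf]
      rw [hsub] at H1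
      rw [hsub'] at H2
      rw [inner_neg_right] at H1
      have hnrm : ‖-(f s)‖ = ‖f s‖ := norm_neg _
      rw [hnrm] at H1
      have hsum : 0 ≤ -⟪v, f s⟫ + ⟪w, f s⟫ + c * ‖f s‖ ^ 2 := by linarith
      rw [inner_sub_left]
      nlinarith [sq_nonneg (‖f s‖), mul_le_mul_of_nonneg_right hc_le (sq_nonneg (‖f s‖))]
    have hpos := Real.exp_pos (-(2 * lam * s))
    have : Real.exp (-(2 * lam * s)) * (-(2 * lam)) * ‖f s‖ ^ 2
        + Real.exp (-(2 * lam * s)) * (2 * ⟪v - w, f s⟫)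
        = Real.exp (-(2 * lam * s)) * (2 * (⟪v - w, f s⟫ - lam * ‖f s‖ ^ 2)) := by ring
    rw [this]
    apply mul_nonpos_of_nonneg_of_nonpos hpos.le
    linarith
  -- conclude via the Gronwall-type lemma
  have hfinal : g T ≤ g 0 := ae_key hT hgLip hae
  have hg0 : g 0 = 0 := by
    rw [hg, hf]; simp [h0]
  have hgT : 0 ≤ ‖f T‖ ^ 2 := by positivity
  have : ‖f T‖ ^ 2 ≤ 0 := by
    have hp := Real.exp_pos (-(2 * lam * T))
    rw [hg0] at hfinal
    rw [hg] at hfinal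
    have hfinal' : Real.exp (-(2 * lam * T)) * ‖f T‖ ^ 2 ≤ 0 := hfinal
    nlinarith
  have : f T = 0 := by
    have : ‖f T‖ = 0 := by nlinarith [norm_nonneg (f T)]
    exact norm_eq_zero.mp this
  rw [hf] at this
  exact sub_eq_zero.mp this
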